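/- The function λ₁ ↦ 1/λ₁ − e^{−λ₁}/(1 − e^{−λ₁}) is strictly decreasing on (0,∞), tends to 1/2 as λ₁ → 0⁺, and tends to 0 as λ₁ → ∞; hence for every α₁ ∈ (0, 1/2) the equation 1/λ₁ − e^{−λ₁}/(1 − e^{−λ₁}) = α₁ has a unique positive solution. -/

import Mathlib

open Real Set Filter

-- derivative of the function at x > 0
lemma stmt13_hasDeriv {x : ℝ} (hx : 0 < x) :
    HasDerivAt (fun l : ℝ => 1 / l - Real.exp (-l) / (1 - Real.exp (-l)))
      (-(1/x^2) + Real.exp (-x) / (1 - Real.exp (-x))^2) x := by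
  have he : Real.exp (-x) < 1 := by rw [Real.exp_lt_one_iff]; linarith
  have hne : (1 : ℝ) - Real.exp (-x) ≠ 0 := by linarith
  have h1 : HasDerivAt (fun l : ℝ => 1 / l) (-(1/x^2)) x := by
    simpa [one_div] using hasDerivAt_inv hx.ne'
  have h2 : HasDerivAt (fun l : ℝ => Real.exp (-l)) (-Real.exp (-x)) x := by
    simpa [Function.comp_def] using (Real.hasDerivAt_exp (-x)).comp x (hasDerivAt_neg x)
  have h3 : HasDerivAt (fun l : ℝ => 1 - Real.exp (-l)) (Real.exp (-x)) x := by
    simpa [Pi.sub_def] using (hasDerivAt_const x (1:ℝ)).sub h2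
  have h4 := h2.div h3 hne
  have h5 := h1.sub h4
  exact h5.congr_deriv (by ring)

theorem stmt13_anti :
    StrictAntiOn (fun l : ℝ => 1 / l - Real.exp (-l) / (1 - Real.exp (-l))) (Set.Ioi 0) := by
  apply strictAntiOn_of_deriv_neg (convex_Ioi 0)
  · exact fun x hx => ((stmt13_hasDeriv hx).continuousAt).continuousWithinAt
  · intro x hx
    rw [interior_Ioi] at hx
    have hxpos : (0:ℝ) < x := hx
    rw [(stmt13_hasDeriv hx).deriv]
    have he : Real.exp (-x) < 1 := by rw [Real.exp_lt_one_iff]; linarith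
    have hpos : (0:ℝ) < 1 - Real.exp (-x) := by linarith
    -- key inequality : x * exp(-x/2) < 1 - exp(-x)
    have hs : x/2 < Real.sinh (x/2) := Real.self_lt_sinh_iff.mpr (by linarith)
    rw [Real.sinh_eq] at hs
    have hu : (0:ℝ) < Real.exp (-(x/2)) := Real.exp_pos _
    have hux : Real.exp (-(x/2)) * Real.exp (-(x/2)) = Real.exp (-x) := by
      rw [← Real.exp_add]; ring_nf
    have hkey : x * Real.exp (-(x/2)) < 1 - Real.exp (-x) := by
      have h := (mul_lt_mul_of_pos_right (by linarith : x < Real.exp (x/2) - Real.exp (-(x/2))) hu)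
      have : Real.exp (x/2) * Real.exp (-(x/2)) = 1 := by
        rw [← Real.exp_add]; simp
      nlinarith
    have hsq : x^2 * Real.exp (-x) < (1 - Real.exp (-x))^2 := by
      nlinarith [mul_pos hxpos hu]
    have : Real.exp (-x) / (1 - Real.exp (-x))^2 < 1/x^2 := by
      rw [div_lt_div_iff₀ (by positivity) (by positivity)]
      nlinarith
    linarith

theorem stmt13_lim0 :
    Filter.Tendsto (fun l : ℝ => 1 / l - Real.exp (-l) / (1 - Real.exp (-l)))
      (nhdsWithin 0 (Set.Ioi 0)) (nhds (1 / 2)) := by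
  have heq : ∀ l ∈ Set.Ioi (0:ℝ),
      (Real.exp l - 1 - l) / (l * (Real.exp l - 1))
        = 1 / l - Real.exp (-l) / (1 - Real.exp (-l)) := by
    intro l hl
    have hl0 : (0:ℝ) < l := hl
    have h1 : Real.exp l ≠ 1 := by
      have := Real.add_one_lt_exp hl0.ne'
      exact (by linarith : (1:ℝ) < Real.exp l).ne'
    have h2 : (1:ℝ) - Real.exp (-l) ≠ 0 := by
      have : Real.exp (-l) < 1 := by rw [Real.exp_lt_one_iff]; linarith
      linarith
    have h3 : Real.exp l - 1 ≠ 0 := sub_ne_zero.mpr h1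
    rw [Real.exp_neg]
    have hep : Real.exp l ≠ 0 := (Real.exp_pos l).ne'
    field_simp
  have hinner : Filter.Tendsto
      (fun l : ℝ => (Real.exp l - 1) / (Real.exp l - 1 + l * Real.exp l))
      (nhdsWithin 0 (Set.Ioi 0)) (nhds (1/2)) := by
    apply HasDerivAt.lhopital_zero_nhdsGT
      (f' := fun l => Real.exp l) (g' := fun l => Real.exp l + (Real.exp l + l * Real.exp l))
    · filter_upwards with l
      simpa using (Real.hasDerivAt_exp l).sub_const 1
    · filter_upwards with l
      have := ((Real.hasDerivAt_exp l).sub_const 1).add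
        ((hasDerivAt_id l).mul (Real.hasDerivAt_exp l))
      simpa [Pi.add_def, Pi.mul_def] using this
    · filter_upwards [self_mem_nhdsWithin] with l (hl : 0 < l)
      have := Real.exp_pos l
      positivity
    · apply tendsto_nhdsWithin_of_tendsto_nhds
      have : Continuous (fun l : ℝ => Real.exp l - 1) := by continuity
      simpa using this.tendsto 0
    · apply tendsto_nhdsWithin_of_tendsto_nhds
      have : Continuous (fun l : ℝ => Real.exp l - 1 + l * Real.exp l) := by continuity
      simpa using this.tendsto 0
    · apply tendsto_nhdsWithin_of_tendsto_nhds
      have hnum : Filter.Tendsto (fun l : ℝ => Real.exp l) (nhds 0) (nhds 1) := by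
        simpa using Real.continuous_exp.tendsto 0
      have hden : Filter.Tendsto
          (fun l : ℝ => Real.exp l + (Real.exp l + l * Real.exp l)) (nhds 0) (nhds 2) := by
        have : Continuous (fun l : ℝ => Real.exp l + (Real.exp l + l * Real.exp l)) := by
          continuity
        have h := this.tendsto 0
        norm_num at h
        exact h
      exact hnum.div hden (by norm_num)
  have houter : Filter.Tendsto
      (fun l : ℝ => (Real.exp l - 1 - l) / (l * (Real.exp l - 1)))
      (nhdsWithin 0 (Set.Ioi 0)) (nhds (1/2)) := by
    apply HasDerivAt.lhopital_zero_nhdsGT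
      (f' := fun l => Real.exp l - 1) (g' := fun l => Real.exp l - 1 + l * Real.exp l)
    · filter_upwards with l
      have := ((Real.hasDerivAt_exp l).sub_const 1).sub (hasDerivAt_id l)
      simpa [Pi.sub_def] using this
    · filter_upwards with l
      have := (hasDerivAt_id l).mul ((Real.hasDerivAt_exp l).sub_const 1)
      simp only [id_eq] at this
      exact this.congr_deriv (by ring)
    · filter_upwards [self_mem_nhdsWithin] with l (hl : 0 < l)
      have h1 : 0 < Real.exp l - 1 := by
        have := Real.add_one_lt_exp (x := l) hl.ne'
        linarith
      have h2 : 0 < l * Real.exp l := mul_pos hl (Real.exp_pos l)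
      positivity
    · apply tendsto_nhdsWithin_of_tendsto_nhds
      have : Continuous (fun l : ℝ => Real.exp l - 1 - l) := by continuity
      simpa using this.tendsto 0
    · apply tendsto_nhdsWithin_of_tendsto_nhds
      have : Continuous (fun l : ℝ => l * (Real.exp l - 1)) := by continuity
      simpa using this.tendsto 0
    · exact hinner
  exact houter.congr' (eventually_of_mem self_mem_nhdsWithin heq)

theorem stmt13_limtop :
    Filter.Tendsto (fun l : ℝ => 1 / l - Real.exp (-l) / (1 - Real.exp (-l)))
      Filter.atTop (nhds 0) := by
  have h1 : Filter.Tendsto (fun l : ℝ => 1 / l) atTop (nhds 0) := by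
    simpa [one_div] using tendsto_inv_atTop_zero
  have he : Filter.Tendsto (fun l : ℝ => Real.exp (-l)) atTop (nhds 0) := by
    exact Real.tendsto_exp_neg_atTop_nhds_zero
  have h2 : Filter.Tendsto (fun l : ℝ => Real.exp (-l) / (1 - Real.exp (-l))) atTop
      (nhds (0 / (1 - 0))) := he.div (tendsto_const_nhds.sub he) (by norm_num)
  norm_num at h2
  simpa using h1.sub h2

theorem stmt13 :
    StrictAntiOn (fun l : ℝ => 1 / l - Real.exp (-l) / (1 - Real.exp (-l))) (Set.Ioi 0) ∧
    Filter.Tendsto (fun l : ℝ => 1 / l - Real.exp (-l) / (1 - Real.exp (-l)))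
      (nhdsWithin 0 (Set.Ioi 0)) (nhds (1 / 2)) ∧
    Filter.Tendsto (fun l : ℝ => 1 / l - Real.exp (-l) / (1 - Real.exp (-l)))
      Filter.atTop (nhds 0) ∧
    ∀ α₁ ∈ Set.Ioo (0:ℝ) (1 / 2),
      ∃! l : ℝ, 0 < l ∧ 1 / l - Real.exp (-l) / (1 - Real.exp (-l)) = α₁ := by
  set f : ℝ → ℝ := fun l => 1 / l - Real.exp (-l) / (1 - Real.exp (-l)) with hf
  refine ⟨stmt13_anti, stmt13_lim0, stmt13_limtop, ?_⟩
  intro α hα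
  obtain ⟨hα0, hα2⟩ := hα
  -- get a with f a > α
  obtain ⟨a, hfa, ha⟩ :=
    ((stmt13_lim0.eventually (eventually_gt_nhds hα2)).and self_mem_nhdsWithin).exists
  have ha' : (0:ℝ) < a := ha
  -- get b > a with f b < α
  obtain ⟨b, hfb, hab⟩ :=
    ((stmt13_limtop.eventually (eventually_lt_nhds hα0)).and (eventually_gt_atTop a)).exists
  have hb' : (0:ℝ) < b := lt_trans ha' hab
  have hcont : ContinuousOn f (Set.Icc a b) := by
    intro x hx
    exact ((stmt13_hasDeriv (lt_of_lt_of_le ha' hx.1)).continuousAt).continuousWithinAt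
  have : α ∈ Set.Icc (f b) (f a) := ⟨le_of_lt hfb, le_of_lt hfa⟩
  obtain ⟨l, hl, hfl⟩ := intermediate_value_Icc' (le_of_lt hab) hcont this
  have hl0 : 0 < l := lt_of_lt_of_le ha' hl.1
  refine ⟨l, ⟨hl0, hfl⟩, ?_⟩
  rintro y ⟨hy0, hfy⟩
  exact stmt13_anti.injOn hy0 hl0 (hfy.trans hfl.symm)
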